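/- (Bergman) A partially ordered set P has the property that every downward directed subset of P has a greatest lower bound in P if and only if every chain (totally ordered subset) of P has a greatest lower bound in P. -/

import Mathlib

open Set Cardinal

universe u

namespace Stmt7Aux

variable {P : Type u} [PartialOrder P]

/-- A finite nonempty downward directed set has a least element, hence a GLB. -/
lemma finite_case {S : Set P} (hfin : S.Finite) (hne : S.Nonempty)
    (hdir : ∀ p ∈ S, ∀ q ∈ S, ∃ r ∈ S, r ≤ p ∧ r ≤ q) : ∃ a : P, IsGLB S a := by
  obtain ⟨m, hm, hmin⟩ := hfin.exists_minimal hne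
  refine ⟨m, IsLeast.isGLB ⟨hm, fun x hx => ?_⟩⟩
  obtain ⟨r, hr, hrm, hrx⟩ := hdir m hm x hx
  have : m = r := le_antisymm (hmin hr hrm) hrm
  exact this ▸ hrx

/-- Countably infinite downward directed sets: build a decreasing coinitial sequence. -/
lemma countable_case
    (hc : ∀ C : Set P, C.Nonempty → IsChain (· ≤ ·) C → ∃ a : P, IsGLB C a)
    {S : Set P} (hcnt : S.Countable) (hne : S.Nonempty)
    (hdir : ∀ p ∈ S, ∀ q ∈ S, ∃ r ∈ S, r ≤ p ∧ r ≤ q) : ∃ a : P, IsGLB S a := by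
  obtain ⟨x, hx⟩ := (Set.countable_iff_exists_surjective hne).1 hcnt
  -- choice function for lower bounds
  have hstep : ∀ p : ↥S, ∀ q : ↥S, ∃ r : ↥S, (r : P) ≤ p ∧ (r : P) ≤ q := by
    rintro ⟨p, hp⟩ ⟨q, hq⟩
    obtain ⟨r, hr, h1, h2⟩ := hdir p hp q hq
    exact ⟨⟨r, hr⟩, h1, h2⟩
  choose f hf1 hf2 using hstep
  let c : ℕ → ↥S := fun n => Nat.rec (x 0) (fun n cn => f cn (x (n + 1))) n
  have hsucc : ∀ n, c (n + 1) = f (c n) (x (n + 1)) := fun n => rfl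
  have hanti : ∀ n m, m ≤ n → (c n).1 ≤ (c m).1 := by
    intro n
    induction n with
    | zero =>
      intro m hm
      obtain rfl := Nat.le_zero.mp hm
      exact le_rfl
    | succ k ih =>
      intro m hm
      rcases Nat.lt_or_ge m (k + 1) with h | h
      · exact le_trans (by rw [hsucc]; exact hf1 _ _) (ih m (Nat.lt_succ_iff.mp h))
      · obtain rfl : m = k + 1 := le_antisymm hm h
        exact le_rfl
  have hcx : ∀ n, (c n).1 ≤ (x n).1 := by
    intro n
    cases n with
    | zero => exact le_rfl
    | succ k => rw [hsucc]; exact hf2 _ _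
  have hchain : IsChain (· ≤ ·) (Set.range fun n => (c n).1) := by
    rintro _ ⟨m, rfl⟩ _ ⟨n, rfl⟩ _
    rcases le_total m n with h | h
    · exact Or.inr (hanti n m h)
    · exact Or.inl (hanti m n h)
  obtain ⟨a, ha⟩ := hc _ (Set.range_nonempty _) hchain
  refine ⟨a, ⟨fun d hd => ?_, fun b hb => ?_⟩⟩
  · obtain ⟨n, hn⟩ := hx ⟨d, hd⟩
    have : (c n).1 ≤ d := by
      have := hcx n
      rw [hn] at this
      exact this
    exact le_trans (ha.1 ⟨n, rfl⟩) this
  · refine ha.2 ?_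
    rintro _ ⟨n, rfl⟩
    exact hb (c n).2

section Closure

variable (f : P → P → P)

/-- One step of closing under the binary lower-bound operation. -/
def step (A : Set P) : Set P := A ∪ Set.image2 f A A

lemma subset_step (A : Set P) : A ⊆ step f A := Set.subset_union_left

lemma step_mono {A B : Set P} (h : A ⊆ B) : step f A ⊆ step f B :=
  Set.union_subset_union h (Set.image2_subset h h)

/-- The closure under the binary operation. -/
def cl (A : Set P) : Set P := ⋃ n : ULift.{u} ℕ, (step f)^[n.down] A

lemma subset_cl (A : Set P) : A ⊆ cl f A :=
  Set.subset_iUnion (fun n : ULift.{u} ℕ => (step f)^[n.down] A) ⟨0⟩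

lemma iterate_subset_cl (A : Set P) (n : ℕ) : (step f)^[n] A ⊆ cl f A :=
  Set.subset_iUnion (fun n : ULift.{u} ℕ => (step f)^[n.down] A) ⟨n⟩

lemma iterate_mono_n (A : Set P) {m n : ℕ} (h : m ≤ n) :
    (step f)^[m] A ⊆ (step f)^[n] A := by
  induction n with
  | zero => simp_all
  | succ k ih =>
    rcases Nat.lt_or_ge m (k + 1) with h' | h'
    · refine (ih (Nat.lt_succ_iff.mp h')).trans ?_
      rw [Function.iterate_succ_apply']
      exact subset_step f _
    · have : m = k + 1 := le_antisymm h h'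
      subst this; exact subset_refl _
  
lemma cl_mono {A B : Set P} (h : A ⊆ B) : cl f A ⊆ cl f B := by
  refine Set.iUnion_subset fun n => ?_
  refine Set.subset_iUnion_of_subset n ?_
  induction n.down with
  | zero => exact h
  | succ k ih => simpa [Function.iterate_succ_apply'] using step_mono f ih

lemma cl_subset {S A : Set P} (hfS : ∀ p ∈ S, ∀ q ∈ S, f p q ∈ S) (h : A ⊆ S) :
    cl f A ⊆ S := by
  refine Set.iUnion_subset fun n => ?_
  induction n.down with
  | zero => exact h
  | succ k ih =>
    rw [Function.iterate_succ_apply']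
    refine Set.union_subset ih ?_
    rintro _ ⟨p, hp, q, hq, rfl⟩
    exact hfS p (ih hp) q (ih hq)

lemma cl_directed {S A : Set P}
    (hfS : ∀ p ∈ S, ∀ q ∈ S, f p q ∈ S)
    (hle : ∀ p ∈ S, ∀ q ∈ S, f p q ≤ p ∧ f p q ≤ q) (h : A ⊆ S) :
    ∀ p ∈ cl f A, ∀ q ∈ cl f A, ∃ r ∈ cl f A, r ≤ p ∧ r ≤ q := by
  intro p hp q hq
  obtain ⟨_, ⟨⟨m⟩, rfl⟩, hpm⟩ := hp
  obtain ⟨_, ⟨⟨n⟩, rfl⟩, hqn⟩ := hq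
  have hpS : p ∈ S := cl_subset f hfS h (iterate_subset_cl f A m hpm)
  have hqS : q ∈ S := cl_subset f hfS h (iterate_subset_cl f A n hqn)
  refine ⟨f p q, ?_, (hle p hpS q hqS).1, (hle p hpS q hqS).2⟩
  have hpm' : p ∈ (step f)^[max m n] A := iterate_mono_n f A (le_max_left m n) hpm
  have hqn' : q ∈ (step f)^[max m n] A := iterate_mono_n f A (le_max_right m n) hqn
  refine iterate_subset_cl f A (max m n + 1) ?_
  rw [Function.iterate_succ_apply']
  exact Or.inr ⟨p, hpm', q, hqn', rfl⟩

lemma mk_cl_le (A : Set P) : #(cl f A) ≤ max #A ℵ₀ := by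
  set m := max #A ℵ₀ with hm
  have hm0 : ℵ₀ ≤ m := le_max_right _ _
  have hiter : ∀ n : ℕ, #((step f)^[n] A) ≤ m := by
    intro n
    induction n with
    | zero => exact le_max_left _ _
    | succ k ih =>
      rw [Function.iterate_succ_apply']
      calc #(step f ((step f)^[k] A))
          ≤ #((step f)^[k] A) + #(Set.image2 f ((step f)^[k] A) ((step f)^[k] A)) :=
            Cardinal.mk_union_le _ _
        _ ≤ m + m * m := by
            refine add_le_add ih ((Cardinal.mk_image2_le).trans ?_)
            exact mul_le_mul' ih ih
        _ = m := by rw [Cardinal.mul_eq_self hm0, Cardinal.add_eq_self hm0]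
  calc #(cl f A) ≤ #(ULift.{u} ℕ) * ⨆ n : ULift.{u} ℕ, #((step f)^[n.down] A) :=
        Cardinal.mk_iUnion_le _
    _ ≤ ℵ₀ * m := by
        refine mul_le_mul' (by simp) (ciSup_le' fun n => hiter n.down)
    _ ≤ m * m := mul_le_mul' hm0 le_rfl
    _ = m := Cardinal.mul_eq_self hm0

end Closure

lemma main (hc : ∀ C : Set P, C.Nonempty → IsChain (· ≤ ·) C → ∃ a : P, IsGLB C a)
    (c : Cardinal.{u}) :
    ∀ S : Set P, #S ≤ c → S.Nonempty →
      (∀ p ∈ S, ∀ q ∈ S, ∃ r ∈ S, r ≤ p ∧ r ≤ q) → ∃ a : P, IsGLB S a := by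
  induction c using WellFoundedLT.induction with
  | _ c IH =>
  intro S hcard hne hdir
  by_cases hfin : S.Finite
  · exact finite_case hfin hne hdir
  by_cases hcnt : S.Countable
  · exact countable_case hc hcnt hne hdir
  -- uncountable case
  have hκ : ℵ₀ < #S := by
    rw [← Cardinal.le_aleph0_iff_set_countable, not_le] at hcnt
    exact hcnt
  -- choice function
  have hstep : ∀ p q : P, ∃ r : P, p ∈ S → q ∈ S → r ∈ S ∧ r ≤ p ∧ r ≤ q := by
    intro p q
    by_cases hpq : p ∈ S ∧ q ∈ S
    · obtain ⟨r, hr, h1, h2⟩ := hdir p hpq.1 q hpq.2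
      exact ⟨r, fun _ _ => ⟨hr, h1, h2⟩⟩
    · exact ⟨p, fun h1 h2 => absurd ⟨h1, h2⟩ hpq⟩
  choose f hf using hstep
  have hfS : ∀ p ∈ S, ∀ q ∈ S, f p q ∈ S := fun p hp q hq => (hf p q hp hq).1
  have hfle : ∀ p ∈ S, ∀ q ∈ S, f p q ≤ p ∧ f p q ≤ q := fun p hp q hq =>
    ⟨(hf p q hp hq).2.1, (hf p q hp hq).2.2⟩
  -- index type: the initial ordinal of #S
  set κ : Cardinal.{u} := #S with hκdef
  have hne' : Nonempty κ.ord.ToType := by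
    rw [← Cardinal.mk_ne_zero_iff, Cardinal.mk_ord_toType]
    exact Cardinal.mk_ne_zero_iff.2 hne.to_subtype
  obtain ⟨e⟩ : Nonempty (κ.ord.ToType ≃ ↥S) :=
    Cardinal.eq.mp (Cardinal.mk_ord_toType κ)
  set D : κ.ord.ToType → Set P := fun i => cl f ((fun j => ((e j : ↥S) : P)) '' Set.Iic i)
    with hD
  have hbase : ∀ i, (fun j => ((e j : ↥S) : P)) '' Set.Iic i ⊆ S := by
    rintro i _ ⟨j, _, rfl⟩; exact (e j).2
  have hDS : ∀ i, D i ⊆ S := fun i => cl_subset f hfS (hbase i)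
  have hDmono : ∀ i j, i ≤ j → D i ⊆ D j := fun i j hij =>
    cl_mono f (Set.image_mono (Set.Iic_subset_Iic.2 hij))
  have hDne : ∀ i, (D i).Nonempty :=
    fun i => ⟨(e i : P), subset_cl f _ ⟨i, Set.mem_Iic.2 le_rfl, rfl⟩⟩
  have hDdir : ∀ i, ∀ p ∈ D i, ∀ q ∈ D i, ∃ r ∈ D i, r ≤ p ∧ r ≤ q :=
    fun i => cl_directed f hfS hfle (hbase i)
  have hDcard : ∀ i, #(D i) < c := by
    intro i
    refine lt_of_lt_of_le ?_ hcard
    refine lt_of_le_of_lt (mk_cl_le f _) (max_lt ?_ hκ)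
    refine lt_of_le_of_lt (Cardinal.mk_image_le) ?_
    have hsub : Set.Iic i ⊆ insert i (Set.Iio i) := by
      intro x hx
      rcases eq_or_lt_of_le (Set.mem_Iic.1 hx) with h | h
      · exact Or.inl h
      · exact Or.inr h
    have h1 : #(Set.Iic i) ≤ #(Set.Iio i) + 1 :=
      le_trans (Cardinal.mk_le_mk_of_subset hsub) Cardinal.mk_insert_le
    refine lt_of_le_of_lt h1 ?_
    exact Cardinal.add_lt_of_lt hκ.le (Cardinal.mk_Iio_toType_ord_lt i)
      (lt_trans Cardinal.one_lt_aleph0 hκ)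
  -- glb of each piece by induction hypothesis
  have hglb : ∀ i, ∃ a : P, IsGLB (D i) a := fun i =>
    IH #(D i) (hDcard i) (D i) le_rfl (hDne i) (hDdir i)
  choose a ha using hglb
  have hanti : ∀ i j, i ≤ j → a j ≤ a i := by
    intro i j hij
    exact (ha i).2 fun x hx => (ha j).1 (hDmono i j hij hx)
  have hchain : IsChain (· ≤ ·) (Set.range a) := by
    rintro _ ⟨i, rfl⟩ _ ⟨j, rfl⟩ _
    rcases le_total i j with h | h
    · exact Or.inr (hanti i j h)
    · exact Or.inl (hanti j i h)
  obtain ⟨b, hb⟩ := hc _ (Set.range_nonempty _) hchain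
  refine ⟨b, ⟨fun d hd => ?_, fun x hx => ?_⟩⟩
  · set i := e.symm ⟨d, hd⟩ with hi
    have hdi : d ∈ D i := by
      refine subset_cl f _ ⟨i, Set.mem_Iic.2 le_rfl, ?_⟩
      simp [hi]
    exact le_trans (hb.1 ⟨i, rfl⟩) ((ha i).1 hdi)
  · refine hb.2 ?_
    rintro _ ⟨i, rfl⟩
    exact (ha i).2 fun y hy => hx (hDS i hy)

end Stmt7Aux

theorem stmt_7 {P : Type*} [PartialOrder P] :
    (∀ S : Set P, S.Nonempty →
      (∀ p ∈ S, ∀ q ∈ S, ∃ r ∈ S, r ≤ p ∧ r ≤ q) →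
      ∃ a : P, IsGLB S a) ↔
    (∀ C : Set P, C.Nonempty → IsChain (· ≤ ·) C → ∃ a : P, IsGLB C a) := by
  constructor
  · intro h C hne hchain
    refine h C hne fun p hp q hq => ?_
    rcases eq_or_ne p q with rfl | hpq
    · exact ⟨p, hp, le_rfl, le_rfl⟩
    · rcases hchain hp hq hpq with h' | h'
      · exact ⟨p, hp, le_rfl, h'⟩
      · exact ⟨q, hq, h', le_rfl⟩
  · intro hc S hne hdir
    exact Stmt7Aux.main hc #S S le_rfl hne hdir
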